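/- Let U ⊆ ℝ³ be an open set that is star-shaped with respect to a point p ∈ U, and let f : U → ℝ³ be a continuously differentiable vector field with ∇·f = 0 on U. Define A : U → ℝ³ by A(r) = −∫₀¹ t (r−p) × f(p + t(r−p)) dt, where × is the cross product in ℝ³. Then A is differentiable and ∇×A = f on U, where ∇×A denotes the curl (∂A₃/∂y − ∂A₂/∂z, ∂A₁/∂z − ∂A₃/∂x, ∂A₂/∂x − ∂A₁/∂y). -/

import Mathlib

/-- Points of ℝ³, represented as functions `Fin 3 → ℝ`. -/
abbrev R3 := Fin 3 → ℝ

/-- Partial derivative of a scalar function in the `i`-th coordinate direction. -/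
noncomputable def pd (i : Fin 3) (f : R3 → ℝ) (x : R3) : ℝ :=
  fderiv ℝ f x (Pi.single i 1)

/-- Divergence of a vector field on ℝ³. -/
noncomputable def div3 (F : R3 → R3) (x : R3) : ℝ :=
  ∑ i, pd i (fun y => F y i) x

/-- Cross product on ℝ³. -/
noncomputable def cross3 (a b : R3) : R3 :=
  ![a 1 * b 2 - a 2 * b 1, a 2 * b 0 - a 0 * b 2, a 0 * b 1 - a 1 * b 0]

/-- Curl of a vector field on ℝ³. -/
noncomputable def curl3 (F : R3 → R3) (x : R3) : R3 :=
  ![pd 1 (fun y => F y 2) x - pd 2 (fun y => F y 1) x,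
    pd 2 (fun y => F y 0) x - pd 0 (fun y => F y 2) x,
    pd 0 (fun y => F y 1) x - pd 1 (fun y => F y 0) x]

open MeasureTheory Metric intervalIntegral Topology

lemma cross3_norm_le (a b : R3) : ‖cross3 a b‖ ≤ 2 * ‖a‖ * ‖b‖ := by
  have h : ∀ i j k l : Fin 3, |a i * b j - a k * b l| ≤ 2 * ‖a‖ * ‖b‖ := by
    intro i j k l
    have h1 : |a i * b j| ≤ ‖a‖ * ‖b‖ := by
      rw [abs_mul]
      exact mul_le_mul (norm_le_pi_norm a i) (norm_le_pi_norm b j) (abs_nonneg _) (norm_nonneg _)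
    have h2 : |a k * b l| ≤ ‖a‖ * ‖b‖ := by
      rw [abs_mul]
      exact mul_le_mul (norm_le_pi_norm a k) (norm_le_pi_norm b l) (abs_nonneg _) (norm_nonneg _)
    calc |a i * b j - a k * b l| ≤ |a i * b j| + |a k * b l| := abs_sub _ _
      _ ≤ 2 * ‖a‖ * ‖b‖ := by linarith
  refine (pi_norm_le_iff_of_nonneg (by positivity)).2 fun i => ?_
  fin_cases i <;> simpa [cross3, Real.norm_eq_abs] using h _ _ _ _

lemma cross3_bilin : IsBoundedBilinearMap ℝ (fun q : R3 × R3 => cross3 q.1 q.2) where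
  add_left x₁ x₂ y := by funext i; fin_cases i <;> simp [cross3] <;> ring
  smul_left c x y := by funext i; fin_cases i <;> simp [cross3] <;> ring
  add_right x y₁ y₂ := by funext i; fin_cases i <;> simp [cross3] <;> ring
  smul_right c x y := by funext i; fin_cases i <;> simp [cross3] <;> ring
  bound := ⟨2, by norm_num, cross3_norm_le⟩

/-- The cross product as a continuous bilinear map. -/
noncomputable def crossC : R3 →L[ℝ] R3 →L[ℝ] R3 := cross3_bilin.toContinuousLinearMap

@[simp] lemma crossC_apply (a b : R3) : crossC a b = cross3 a b := rfl



@[simp] lemma cross3_smul_right (c : ℝ) (a b : R3) : cross3 a (c • b) = c • cross3 a b :=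
  cross3_bilin.smul_right c a b

/-- fderiv of a coordinate of a differentiable map. -/
lemma pd_coord (g : R3 → R3) (x : R3) (hg : DifferentiableAt ℝ g x) (i j : Fin 3) :
    pd j (fun y => g y i) x = fderiv ℝ g x (Pi.single j 1) i := by
  have h : HasFDerivAt (fun y => g y i) ((ContinuousLinearMap.proj i).comp (fderiv ℝ g x)) x := by
    exact ((ContinuousLinearMap.proj (R := ℝ) (φ := fun _ : Fin 3 => ℝ) i).hasFDerivAt.comp x
      hg.hasFDerivAt : _)
  rw [pd, h.fderiv]; rfl

lemma decomp_vec (w : R3) :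
    w = w 0 • (Pi.single 0 1 : R3) + w 1 • (Pi.single 1 1 : R3) + w 2 • (Pi.single 2 1 : R3) := by
  funext i; fin_cases i <;> simp [Pi.single_apply]

/-- On an open set `U ⊆ ℝ³` star-shaped with respect to `p ∈ U`, for a
continuously differentiable divergence-free vector field `f`, the vector potential
`A(r) = −∫₀¹ t (r−p) × f(p + t(r−p)) dt` is differentiable and satisfies `∇×A = f` on `U`. -/
theorem stmt2 (U : Set R3) (hU : IsOpen U) (p : R3) (hp : p ∈ U)
    (hstar : ∀ r ∈ U, ∀ t ∈ Set.Icc (0 : ℝ) 1, p + t • (r - p) ∈ U)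
    (f : R3 → R3) (hf : ContDiffOn ℝ 1 f U) (hdiv : ∀ x ∈ U, div3 f x = 0)
    (A : R3 → R3)
    (hA : ∀ r ∈ U, A r = -∫ t in (0:ℝ)..1, t • cross3 (r - p) (f (p + t • (r - p)))) :
    ∀ r ∈ U, DifferentiableAt ℝ A r ∧ curl3 A r = f r := by
  have hfdiff : ∀ z ∈ U, HasFDerivAt f (fderiv ℝ f z) z := fun z hz =>
    (((hf.differentiableOn one_ne_zero) z hz).differentiableAt (hU.mem_nhds hz)).hasFDerivAt
  have hcd : ContinuousOn (fderiv ℝ f) U := hf.continuousOn_fderiv_of_isOpen hU le_rfl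
  intro r hr
  set w : R3 := r - p with hwdef
  have hyU : ∀ t ∈ Set.Icc (0:ℝ) 1, p + t • w ∈ U := fun t ht => hstar r hr t ht
  -- a compact thickened segment inside U
  have hycont : Continuous (fun t : ℝ => p + t • w) := continuous_const.add (continuous_id.smul continuous_const)
  have hK : IsCompact ((fun t : ℝ => p + t • w) '' Set.Icc 0 1) :=
    (isCompact_Icc.image hycont)
  have hKU : (fun t : ℝ => p + t • w) '' Set.Icc 0 1 ⊆ U := by
    rintro _ ⟨t, ht, rfl⟩; exact hyU t ht
  obtain ⟨δ, hδpos, hδ⟩ := hK.exists_thickening_subset_open hU hKU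
  set ε := δ/2 with hεdef
  have hεpos : 0 < ε := by positivity
  set K' := cthickening ε ((fun t : ℝ => p + t • w) '' Set.Icc 0 1) with hK'def
  have hK'c : IsCompact K' := hK.cthickening
  have hK'U : K' ⊆ U :=
    subset_trans (cthickening_subset_thickening' hδpos (by simp [hεdef]; linarith) _) hδ
  have hmem : ∀ x ∈ ball r ε, ∀ t ∈ Set.Icc (0:ℝ) 1, p + t • (x - p) ∈ K' := by
    intro x hx t ht
    have hd : dist (p + t • (x - p)) (p + t • w) ≤ ε := by
      rw [dist_eq_norm]
      have : p + t • (x - p) - (p + t • w) = t • (x - r) := by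
        rw [hwdef]; module
      rw [this, norm_smul]
      have hx' : ‖x - r‖ ≤ ε := le_of_lt (by rwa [mem_ball, dist_eq_norm] at hx)
      calc ‖t‖ * ‖x - r‖ ≤ 1 * ε := by
            apply mul_le_mul _ hx' (norm_nonneg _) zero_le_one
            rw [Real.norm_eq_abs, abs_le]; constructor <;> linarith [ht.1, ht.2]
        _ = ε := one_mul ε
    exact mem_cthickening_of_dist_le _ _ _ _ ⟨t, ht, rfl⟩ hd
  have hballU : ball r ε ⊆ U := by
    intro x hx
    have := hK'U (hmem x hx 1 (by norm_num))
    simpa using this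
  -- bounds on f and its derivative on K'
  obtain ⟨Mf, hMf⟩ := hK'c.exists_bound_of_continuousOn (hf.continuousOn.mono hK'U)
  obtain ⟨Md, hMd⟩ := hK'c.exists_bound_of_continuousOn (hcd.mono hK'U)
  -- the integrand and its derivative in x
  set F : R3 → ℝ → R3 := fun x t => t • cross3 (x - p) (f (p + t • (x - p))) with hFdef
  set F' : R3 → ℝ → R3 →L[ℝ] R3 := fun x t =>
    t • (crossC.flip (f (p + t • (x - p))) +
      t • ((crossC (x - p)).comp (fderiv ℝ f (p + t • (x - p))))) with hF'def
  have hF'app : ∀ x t (v : R3), F' x t v =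
      t • (cross3 v (f (p + t • (x - p))) + t • cross3 (x - p) (fderiv ℝ f (p + t • (x - p)) v)) := by
    intro x t v
    simp only [hF'def, ContinuousLinearMap.smul_apply, ContinuousLinearMap.add_apply,
      ContinuousLinearMap.flip_apply, ContinuousLinearMap.coe_comp', Function.comp_apply,
      crossC_apply]
  have hdiffF : ∀ t ∈ Set.Icc (0:ℝ) 1, ∀ x ∈ ball r ε, HasFDerivAt (fun x' => F x' t) (F' x t) x := by
    intro t ht x hx
    have hy : p + t • (x - p) ∈ U := hK'U (hmem x hx t ht)
    have h1 : HasFDerivAt (fun x' : R3 => x' - p) (ContinuousLinearMap.id ℝ R3) x :=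
      (hasFDerivAt_id x).sub_const p
    have h2 : HasFDerivAt (fun x' : R3 => p + t • (x' - p)) (t • ContinuousLinearMap.id ℝ R3) x :=
      (h1.const_smul t).const_add p
    have h3 : HasFDerivAt (fun x' => f (p + t • (x' - p)))
        ((fderiv ℝ f (p + t • (x - p))).comp (t • ContinuousLinearMap.id ℝ R3)) x :=
      (hfdiff _ hy).comp x h2
    have h4 : HasFDerivAt (fun x' => cross3 (x' - p) (f (p + t • (x' - p))))
        ((cross3_bilin.deriv (x - p, f (p + t • (x - p)))).comp
          ((ContinuousLinearMap.id ℝ R3).prod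
            ((fderiv ℝ f (p + t • (x - p))).comp (t • ContinuousLinearMap.id ℝ R3)))) x := by
      exact (cross3_bilin.hasFDerivAt (x - p, f (p + t • (x - p)))).comp x (h1.prodMk h3)
    have h5 := h4.const_smul t
    refine HasFDerivAt.congr_fderiv h5 ?_
    refine ContinuousLinearMap.ext fun v => ?_
    rw [hF'app]
    simp only [ContinuousLinearMap.smul_apply, ContinuousLinearMap.coe_comp', Function.comp_apply,
      ContinuousLinearMap.prod_apply, ContinuousLinearMap.coe_id', id_eq,
      cross3_bilin.deriv_apply, _root_.map_smul, cross3_smul_right]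
    module
  -- continuity in t
  have hmapsTo : ∀ x ∈ ball r ε, Set.MapsTo (fun t : ℝ => p + t • (x - p)) (Set.Icc 0 1) U :=
    fun x hx t ht => hK'U (hmem x hx t ht)
  have hyxcont : ∀ x : R3, Continuous (fun t : ℝ => p + t • (x - p)) := fun x => continuous_const.add (continuous_id.smul continuous_const)
  have hFcont : ∀ x ∈ ball r ε, ContinuousOn (fun t => F x t) (Set.Icc 0 1) := by
    intro x hx
    have hfy : ContinuousOn (fun t : ℝ => f (p + t • (x - p))) (Set.Icc 0 1) :=
      hf.continuousOn.comp (hyxcont x).continuousOn (hmapsTo x hx)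
    exact continuousOn_id.smul ((crossC (x - p)).continuous.comp_continuousOn hfy)
  have hrball : r ∈ ball r ε := mem_ball_self hεpos
  have hfyc : ContinuousOn (fun t : ℝ => f (p + t • (r - p))) (Set.Icc 0 1) :=
    hf.continuousOn.comp (hyxcont r).continuousOn (hmapsTo r hrball)
  have hdyc : ContinuousOn (fun t : ℝ => fderiv ℝ f (p + t • (r - p))) (Set.Icc 0 1) :=
    hcd.comp (hyxcont r).continuousOn (hmapsTo r hrball)
  have hF'cont : ContinuousOn (fun t => F' r t) (Set.Icc 0 1) := by
    have h1 : ContinuousOn (fun t : ℝ => crossC.flip (f (p + t • (r - p)))) (Set.Icc 0 1) :=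
      crossC.flip.continuous.comp_continuousOn hfyc
    have h2 : ContinuousOn (fun t : ℝ => (crossC (r - p)).comp (fderiv ℝ f (p + t • (r - p))))
        (Set.Icc 0 1) := continuousOn_const.clm_comp hdyc
    exact continuousOn_id.smul (h1.add (continuousOn_id.smul h2))
  -- uniform bound on the derivative
  set C : ℝ := 2 * |Mf| + 2 * (‖w‖ + ε) * |Md| with hCdef
  have hbound : ∀ t ∈ Set.Icc (0:ℝ) 1, ∀ x ∈ ball r ε, ‖F' x t‖ ≤ C := by
    intro t ht x hx
    have hyK : p + t • (x - p) ∈ K' := hmem x hx t ht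
    have hfb : ‖f (p + t • (x - p))‖ ≤ |Mf| := (hMf _ hyK).trans (le_abs_self Mf)
    have hdb : ‖fderiv ℝ f (p + t • (x - p))‖ ≤ |Md| := (hMd _ hyK).trans (le_abs_self Md)
    have hxp : ‖x - p‖ ≤ ‖w‖ + ε := by
      have hxe : x - p = w + (x - r) := by rw [hwdef]; module
      rw [hxe]
      have hxr := (mem_ball_iff_norm.1 hx).le
      calc ‖w + (x - r)‖ ≤ ‖w‖ + ‖x - r‖ := norm_add_le _ _
        _ ≤ ‖w‖ + ε := by linarith
    have habs : |t| ≤ 1 := abs_le.2 ⟨by linarith [ht.1], ht.2⟩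
    refine ContinuousLinearMap.opNorm_le_bound _ (by positivity) fun v => ?_
    rw [hF'app]
    have e1 : ‖cross3 v (f (p + t • (x - p)))‖ ≤ 2 * |Mf| * ‖v‖ := by
      refine (cross3_norm_le _ _).trans ?_
      nlinarith [norm_nonneg v, norm_nonneg (f (p + t • (x - p))), abs_nonneg Mf]
    have e2 : ‖cross3 (x - p) (fderiv ℝ f (p + t • (x - p)) v)‖ ≤ 2 * (‖w‖ + ε) * |Md| * ‖v‖ := by
      refine (cross3_norm_le _ _).trans ?_
      have h3 : ‖fderiv ℝ f (p + t • (x - p)) v‖ ≤ |Md| * ‖v‖ :=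
        le_trans ((fderiv ℝ f (p + t • (x - p))).le_opNorm v)
          (by nlinarith [norm_nonneg v, norm_nonneg (fderiv ℝ f (p + t • (x - p)))])
      calc 2 * ‖x - p‖ * ‖fderiv ℝ f (p + t • (x - p)) v‖ ≤ 2 * (‖w‖ + ε) * (|Md| * ‖v‖) := by
            apply mul_le_mul _ h3 (norm_nonneg _) (by positivity)
            have h4 : (0:ℝ) ≤ ‖w‖ + ε := by positivity
            linarith
        _ = 2 * (‖w‖ + ε) * |Md| * ‖v‖ := by ring
    calc ‖t • (cross3 v (f (p + t • (x - p))) +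
          t • cross3 (x - p) (fderiv ℝ f (p + t • (x - p)) v))‖
        ≤ ‖cross3 v (f (p + t • (x - p)))‖ +
          ‖cross3 (x - p) (fderiv ℝ f (p + t • (x - p)) v)‖ := by
          rw [norm_smul, Real.norm_eq_abs]
          refine le_trans (mul_le_of_le_one_left (norm_nonneg _) habs) ?_
          refine (norm_add_le _ _).trans ?_
          rw [norm_smul, Real.norm_eq_abs]
          have := mul_le_of_le_one_left
            (norm_nonneg (cross3 (x - p) (fderiv ℝ f (p + t • (x - p)) v))) habs
          linarith
      _ ≤ 2 * |Mf| * ‖v‖ + 2 * (‖w‖ + ε) * |Md| * ‖v‖ := by linarith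
      _ = C * ‖v‖ := by rw [hCdef]; ring
  -- differentiate under the integral sign
  have hIoc : Set.uIoc (0:ℝ) 1 = Set.Ioc 0 1 := Set.uIoc_of_le zero_le_one
  have hIcc : Set.uIcc (0:ℝ) 1 = Set.Icc 0 1 := Set.uIcc_of_le zero_le_one
  have key : HasFDerivAt (fun x => ∫ t in (0:ℝ)..1, F x t)
      (∫ t in (0:ℝ)..1, F' r t) r := by
    apply intervalIntegral.hasFDerivAt_integral_of_dominated_of_fderiv_le
      (bound := fun _ => C) (s := ball r ε) (ball_mem_nhds r hεpos)
    · filter_upwards [ball_mem_nhds r hεpos] with x hx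
      rw [hIoc]
      exact ((hFcont x hx).mono Set.Ioc_subset_Icc_self).aestronglyMeasurable measurableSet_Ioc
    · apply ContinuousOn.intervalIntegrable
      rw [hIcc]; exact hFcont r hrball
    · rw [hIoc]
      exact (hF'cont.mono Set.Ioc_subset_Icc_self).aestronglyMeasurable measurableSet_Ioc
    · refine Filter.Eventually.of_forall fun t ht x hx => ?_
      rw [hIoc] at ht
      exact hbound t (Set.Ioc_subset_Icc_self ht) x hx
    · exact intervalIntegrable_const
    · refine Filter.Eventually.of_forall fun t ht x hx => ?_
      rw [hIoc] at ht
      exact hdiffF t (Set.Ioc_subset_Icc_self ht) x hx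
  have hAeq : A =ᶠ[𝓝 r] fun x => -∫ t in (0:ℝ)..1, F x t := by
    filter_upwards [ball_mem_nhds r hεpos] with x hx
    exact hA x (hballU hx)
  have hAderiv : HasFDerivAt A (-∫ t in (0:ℝ)..1, F' r t) r := key.neg.congr_of_eventuallyEq hAeq
  refine ⟨hAderiv.differentiableAt, ?_⟩
  -- integrability of F' r and evaluations
  have hF'int : IntervalIntegrable (fun t => F' r t) volume 0 1 := by
    apply ContinuousOn.intervalIntegrable
    rw [hIcc]; exact hF'cont
  have hint : ∀ (v : R3) (k : Fin 3), IntervalIntegrable (fun t => (F' r t v) k) volume 0 1 := by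
    intro v k
    apply ContinuousOn.intervalIntegrable
    rw [hIcc]
    exact (continuous_apply k).comp_continuousOn (hF'cont.clm_apply continuousOn_const)
  have hpdA : ∀ i j : Fin 3, pd j (fun y => A y i) r =
      -∫ t in (0:ℝ)..1, (F' r t (Pi.single j 1)) i := by
    intro i j
    rw [pd_coord A r hAderiv.differentiableAt i j, hAderiv.fderiv]
    have h1 : (-(∫ t in (0:ℝ)..1, F' r t)) (Pi.single j 1) =
        -((∫ t in (0:ℝ)..1, F' r t) (Pi.single j 1)) := rfl
    rw [h1, ContinuousLinearMap.intervalIntegral_apply hF'int]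
    have h2 : IntervalIntegrable (fun t => F' r t (Pi.single j 1)) volume 0 1 := by
      apply ContinuousOn.intervalIntegrable
      rw [hIcc]
      exact hF'cont.clm_apply continuousOn_const
    have h3 := (ContinuousLinearMap.proj (R := ℝ) (φ := fun _ : Fin 3 => ℝ)
      i).intervalIntegral_comp_comm h2
    have h4 : (∫ t in (0:ℝ)..1, F' r t (Pi.single j 1)) i =
        ∫ t in (0:ℝ)..1, (F' r t (Pi.single j 1)) i := h3.symm
    rw [Pi.neg_apply, h4]
  -- divergence-free identity at points of the segment
  have hdivc : ∀ t ∈ Set.Icc (0:ℝ) 1,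
      fderiv ℝ f (p + t • w) (Pi.single 0 1) 0 + fderiv ℝ f (p + t • w) (Pi.single 1 1) 1 +
        fderiv ℝ f (p + t • w) (Pi.single 2 1) 2 = 0 := by
    intro t ht
    have hy := hyU t ht
    have hdf : DifferentiableAt ℝ f (p + t • w) := (hfdiff _ hy).differentiableAt
    have hd := hdiv _ hy
    rw [div3, Fin.sum_univ_three, pd_coord f _ hdf, pd_coord f _ hdf, pd_coord f _ hdf] at hd
    exact hd
  -- expansion of the directional derivative
  have hcw : ∀ (t : ℝ) (i : Fin 3), fderiv ℝ f (p + t • w) w i =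
      w 0 * fderiv ℝ f (p + t • w) (Pi.single 0 1) i +
      w 1 * fderiv ℝ f (p + t • w) (Pi.single 1 1) i +
      w 2 * fderiv ℝ f (p + t • w) (Pi.single 2 1) i := by
    intro t i
    have h5 := congrArg (fun u => fderiv ℝ f (p + t • w) u i) (decomp_vec w)
    rw [h5, map_add, map_add, _root_.map_smul, _root_.map_smul, _root_.map_smul]
    simp [Pi.add_apply, Pi.smul_apply, smul_eq_mul]
  -- fundamental theorem of calculus
  have hFTC : ∀ i : Fin 3,
      (∫ t in (0:ℝ)..1, (2 * t * f (p + t • w) i + t ^ 2 * fderiv ℝ f (p + t • w) w i)) =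
        f r i := by
    intro i
    have hderiv : ∀ t ∈ Set.uIcc (0:ℝ) 1, HasDerivAt (fun s => s ^ 2 * f (p + s • w) i)
        (2 * t * f (p + t • w) i + t ^ 2 * fderiv ℝ f (p + t • w) w i) t := by
      intro t ht
      rw [hIcc] at ht
      have hy := hyU t ht
      have h1 : HasDerivAt (fun s : ℝ => p + s • w) w t := by
        simpa using ((hasDerivAt_id t).smul_const w).const_add p
      have h2 : HasDerivAt (fun s => f (p + s • w)) (fderiv ℝ f (p + t • w) w) t :=
        (hfdiff _ hy).comp_hasDerivAt t h1
      have h3 : HasDerivAt (fun s => f (p + s • w) i) (fderiv ℝ f (p + t • w) w i) t := by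
        exact (ContinuousLinearMap.proj (R := ℝ) (φ := fun _ : Fin 3 => ℝ)
          i).hasFDerivAt.comp_hasDerivAt t h2
      have h4 : HasDerivAt (fun s : ℝ => s ^ 2) (2 * t) t := by
        simpa using hasDerivAt_pow 2 t
      simpa [mul_comm, Pi.mul_def] using h4.mul h3
    have hcont : ContinuousOn
        (fun t : ℝ => 2 * t * f (p + t • w) i + t ^ 2 * fderiv ℝ f (p + t • w) w i)
        (Set.Icc 0 1) := by
      have c1 : ContinuousOn (fun t : ℝ => f (p + t • w) i) (Set.Icc 0 1) :=
        (continuous_apply i).comp_continuousOn hfyc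
      have c2 : ContinuousOn (fun t : ℝ => fderiv ℝ f (p + t • w) w i) (Set.Icc 0 1) :=
        (continuous_apply i).comp_continuousOn (hdyc.clm_apply continuousOn_const)
      exact ((continuousOn_const.mul continuousOn_id).mul c1).add
        ((continuousOn_id.pow 2).mul c2)
    rw [intervalIntegral.integral_eq_sub_of_hasDerivAt hderiv
      (by apply ContinuousOn.intervalIntegrable; rw [hIcc]; exact hcont)]
    have h6 : p + w = r := by rw [hwdef]; module
    simp [h6]
  -- scalar form of the derivative of the integrand
  have hcomp : ∀ (t : ℝ) (v : R3) (k : Fin 3), (F' r t v) k =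
      t * ((cross3 v (f (p + t • w))) k + t * (cross3 w (fderiv ℝ f (p + t • w) v)) k) := by
    intro t v k
    rw [hF'app]
    simp [Pi.smul_apply, smul_eq_mul, ← hwdef]
  funext i
  fin_cases i
  · show curl3 A r 0 = f r 0
    rw [curl3]
    show pd 1 (fun y => A y 2) r - pd 2 (fun y => A y 1) r = f r 0
    rw [hpdA 2 1, hpdA 1 2, neg_sub_neg, ← intervalIntegral.integral_sub (hint _ _) (hint _ _),
      ← hFTC 0]
    apply intervalIntegral.integral_congr
    intro t ht
    dsimp only
    rw [hIcc] at ht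
    have hd := hdivc t ht
    have hcw0 := hcw t 0
    rw [hcomp, hcomp]
    simp only [cross3, Matrix.cons_val_zero, Matrix.cons_val_one, Matrix.head_cons,
      Matrix.cons_val_two, Matrix.tail_cons, Pi.single_eq_same,
      Pi.single_eq_of_ne (by decide : (0:Fin 3) ≠ 1), Pi.single_eq_of_ne (by decide : (0:Fin 3) ≠ 2),
      Pi.single_eq_of_ne (by decide : (1:Fin 3) ≠ 0), Pi.single_eq_of_ne (by decide : (1:Fin 3) ≠ 2),
      Pi.single_eq_of_ne (by decide : (2:Fin 3) ≠ 0), Pi.single_eq_of_ne (by decide : (2:Fin 3) ≠ 1)]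
    linear_combination (-t ^ 2 * w 0) * hd - t ^ 2 * hcw0
  · show curl3 A r 1 = f r 1
    rw [curl3]
    show pd 2 (fun y => A y 0) r - pd 0 (fun y => A y 2) r = f r 1
    rw [hpdA 0 2, hpdA 2 0, neg_sub_neg, ← intervalIntegral.integral_sub (hint _ _) (hint _ _),
      ← hFTC 1]
    apply intervalIntegral.integral_congr
    intro t ht
    dsimp only
    rw [hIcc] at ht
    have hd := hdivc t ht
    have hcw1 := hcw t 1
    rw [hcomp, hcomp]
    simp only [cross3, Matrix.cons_val_zero, Matrix.cons_val_one, Matrix.head_cons,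
      Matrix.cons_val_two, Matrix.tail_cons, Pi.single_eq_same,
      Pi.single_eq_of_ne (by decide : (0:Fin 3) ≠ 1), Pi.single_eq_of_ne (by decide : (0:Fin 3) ≠ 2),
      Pi.single_eq_of_ne (by decide : (1:Fin 3) ≠ 0), Pi.single_eq_of_ne (by decide : (1:Fin 3) ≠ 2),
      Pi.single_eq_of_ne (by decide : (2:Fin 3) ≠ 0), Pi.single_eq_of_ne (by decide : (2:Fin 3) ≠ 1)]
    linear_combination (-t ^ 2 * w 1) * hd - t ^ 2 * hcw1
  · show curl3 A r 2 = f r 2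
    rw [curl3]
    show pd 0 (fun y => A y 1) r - pd 1 (fun y => A y 0) r = f r 2
    rw [hpdA 1 0, hpdA 0 1, neg_sub_neg, ← intervalIntegral.integral_sub (hint _ _) (hint _ _),
      ← hFTC 2]
    apply intervalIntegral.integral_congr
    intro t ht
    dsimp only
    rw [hIcc] at ht
    have hd := hdivc t ht
    have hcw2 := hcw t 2
    rw [hcomp, hcomp]
    simp only [cross3, Matrix.cons_val_zero, Matrix.cons_val_one, Matrix.head_cons,
      Matrix.cons_val_two, Matrix.tail_cons, Pi.single_eq_same,
      Pi.single_eq_of_ne (by decide : (0:Fin 3) ≠ 1), Pi.single_eq_of_ne (by decide : (0:Fin 3) ≠ 2),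
      Pi.single_eq_of_ne (by decide : (1:Fin 3) ≠ 0), Pi.single_eq_of_ne (by decide : (1:Fin 3) ≠ 2),
      Pi.single_eq_of_ne (by decide : (2:Fin 3) ≠ 0), Pi.single_eq_of_ne (by decide : (2:Fin 3) ≠ 1)]
    linear_combination (-t ^ 2 * w 2) * hd - t ^ 2 * hcw2
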